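/- The standard normal CDF Φ is log-concave on ℝ: Φ(x) > 0 for all x, and log Φ is concave. -/

import Mathlib

open MeasureTheory Real

noncomputable def Phi (x : ℝ) : ℝ :=
  (Real.sqrt (2 * Real.pi))⁻¹ * ∫ z in Set.Iic x, Real.exp (-z ^ 2 / 2)

noncomputable def gFun (x : ℝ) : ℝ := ∫ z in Set.Iic x, Real.exp (-z ^ 2 / 2)

lemma integ_exp : Integrable (fun z : ℝ => Real.exp (-z ^ 2 / 2)) := by
  have h := integrable_exp_neg_mul_sq (by norm_num : (0:ℝ) < 1/2)
  convert h using 2 with z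
  ring_nf

lemma integ_mul_exp : Integrable (fun z : ℝ => z * Real.exp (-z ^ 2 / 2)) := by
  have h := integrable_mul_exp_neg_mul_sq (by norm_num : (0:ℝ) < 1/2)
  convert h using 2 with z
  ring_nf

lemma gFun_pos (x : ℝ) : 0 < gFun x := by
  rw [gFun, setIntegral_pos_iff_support_of_nonneg_ae]
  · have : Function.support (fun z : ℝ => Real.exp (-z ^ 2 / 2)) = Set.univ := by
      ext z; simp [Real.exp_ne_zero]
    rw [this, Set.univ_inter]
    simp [Real.volume_Iic]
  · filter_upwards with z using (Real.exp_pos _).le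
  · exact integ_exp.integrableOn

lemma hasDerivAt_gFun (x : ℝ) : HasDerivAt gFun (Real.exp (-x ^ 2 / 2)) x := by
  have heq : gFun = fun y => gFun 0 + ∫ z in (0:ℝ)..y, Real.exp (-z ^ 2 / 2) := by
    funext y
    have := intervalIntegral.integral_Iic_sub_Iic integ_exp.integrableOn integ_exp.integrableOn
      (a := 0) (b := y) (μ := volume)
    rw [← this]; simp [gFun]
  rw [heq]
  refine (intervalIntegral.integral_hasDerivAt_right
    integ_exp.intervalIntegrable ?_ ?_).const_add _
  · exact integ_exp.aestronglyMeasurable.stronglyMeasurableAtFilter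
  · exact (Real.continuous_exp.comp (by continuity)).continuousAt

lemma hasDerivAt_exp_neg_sq (x : ℝ) :
    HasDerivAt (fun z : ℝ => Real.exp (-z ^ 2 / 2)) (-x * Real.exp (-x ^ 2 / 2)) x := by
  have h1 : HasDerivAt (fun z : ℝ => -z ^ 2 / 2) (-x) x := by
    have := ((hasDerivAt_pow 2 x).neg).div_const 2
    exact this.congr_deriv (by norm_num; ring)
  have := h1.exp
  convert this using 1; ring

lemma integral_Iic_mul_exp (x : ℝ) :
    ∫ z in Set.Iic x, z * Real.exp (-z ^ 2 / 2) = -Real.exp (-x ^ 2 / 2) := by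
  have hderiv : ∀ z ∈ Set.Iic x, HasDerivAt (fun z : ℝ => -Real.exp (-z ^ 2 / 2))
      (z * Real.exp (-z ^ 2 / 2)) z := by
    intro z _
    have := (hasDerivAt_exp_neg_sq z).neg
    exact this.congr_deriv (by ring)
  have htend : Filter.Tendsto (fun z : ℝ => -Real.exp (-z ^ 2 / 2)) Filter.atBot (nhds 0) := by
    rw [show (0:ℝ) = -0 by ring]
    refine (Real.tendsto_exp_atBot.comp ?_).neg
    have h1 : Filter.Tendsto (fun z : ℝ => z ^ 2) Filter.atBot Filter.atTop := by
      have := (Filter.tendsto_pow_atTop (α := ℝ) (n := 2) (by norm_num)).comp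
        Filter.tendsto_neg_atBot_atTop
      exact this.congr fun z => by simp [Function.comp]
    have h2 := (Filter.tendsto_neg_atTop_atBot.comp h1).atBot_div_const (r := (2:ℝ)) (by norm_num)
    convert h2 using 2 with z
    rfl
  have := integral_Iic_of_hasDerivAt_of_tendsto' hderiv integ_mul_exp.integrableOn htend
  rw [this]; ring

lemma key_ineq (x : ℝ) : -x * gFun x ≤ Real.exp (-x ^ 2 / 2) := by
  rcases le_or_gt 0 x with hx | hx
  · have : -x * gFun x ≤ 0 :=
      mul_nonpos_of_nonpos_of_nonneg (by linarith) (gFun_pos x).le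
    linarith [Real.exp_pos (-x ^ 2 / 2)]
  · have hmono : gFun x ≤ ∫ z in Set.Iic x, (z / x) * Real.exp (-z ^ 2 / 2) := by
      rw [gFun]
      refine setIntegral_mono_on integ_exp.integrableOn ?_ measurableSet_Iic ?_
      · have : (fun z : ℝ => (z / x) * Real.exp (-z ^ 2 / 2)) =
            fun z => x⁻¹ * (z * Real.exp (-z ^ 2 / 2)) := by funext z; ring
        rw [this]
        exact (integ_mul_exp.const_mul _).integrableOn
      · intro z hz
        have hz' : z ≤ x := hz
        have h1 : (1 : ℝ) ≤ z / x := by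
          rw [le_div_iff_of_neg hx]
          linarith
        nlinarith [Real.exp_pos (-z ^ 2 / 2)]
    have hint : ∫ z in Set.Iic x, (z / x) * Real.exp (-z ^ 2 / 2)
        = x⁻¹ * -Real.exp (-x ^ 2 / 2) := by
      have : (fun z : ℝ => (z / x) * Real.exp (-z ^ 2 / 2)) =
          fun z => x⁻¹ * (z * Real.exp (-z ^ 2 / 2)) := by funext z; ring
      rw [this, integral_const_mul, integral_Iic_mul_exp]
    rw [hint] at hmono
    have hxne : x ≠ 0 := ne_of_lt hx
    have h2 : -x * gFun x ≤ -x * (x⁻¹ * -Real.exp (-x ^ 2 / 2)) := by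
      apply mul_le_mul_of_nonneg_left hmono (by linarith)
    calc -x * gFun x ≤ -x * (x⁻¹ * -Real.exp (-x ^ 2 / 2)) := h2
      _ = Real.exp (-x ^ 2 / 2) := by field_simp

lemma hasDerivAt_F (x : ℝ) :
    HasDerivAt (fun y => Real.exp (-y ^ 2 / 2) / gFun y)
      ((-x * Real.exp (-x ^ 2 / 2) * gFun x - Real.exp (-x ^ 2 / 2) *
        Real.exp (-x ^ 2 / 2)) / gFun x ^ 2) x :=
  (hasDerivAt_exp_neg_sq x).div (hasDerivAt_gFun x) (gFun_pos x).ne'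

lemma antitone_F : Antitone (fun y => Real.exp (-y ^ 2 / 2) / gFun y) := by
  apply antitone_of_deriv_nonpos
  · exact fun x => (hasDerivAt_F x).differentiableAt
  · intro x
    rw [(hasDerivAt_F x).deriv]
    apply div_nonpos_of_nonpos_of_nonneg _ (sq_nonneg _)
    have hk := key_ineq x
    nlinarith [Real.exp_pos (-x ^ 2 / 2), gFun_pos x]

lemma concave_log_gFun : ConcaveOn ℝ Set.univ (fun x => Real.log (gFun x)) := by
  have hd : ∀ x, HasDerivAt (fun y => Real.log (gFun y))
      (Real.exp (-x ^ 2 / 2) / gFun x) x :=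
    fun x => (hasDerivAt_gFun x).log (gFun_pos x).ne'
  apply Antitone.concaveOn_univ_of_deriv
  · exact fun x => (hd x).differentiableAt
  · have : deriv (fun y => Real.log (gFun y)) = fun y => Real.exp (-y ^ 2 / 2) / gFun y :=
      funext fun x => (hd x).deriv
    rw [this]
    exact antitone_F

theorem stmt1 :
    (∀ x : ℝ, 0 < Phi x) ∧
    ConcaveOn ℝ Set.univ (fun x => Real.log (Phi x)) := by
  have hc : 0 < (Real.sqrt (2 * Real.pi))⁻¹ := by
    rw [inv_pos]
    exact Real.sqrt_pos.mpr (by positivity)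
  constructor
  · intro x
    exact mul_pos hc (gFun_pos x)
  · have heq : (fun x => Real.log (Phi x)) =
        fun x => Real.log ((Real.sqrt (2 * Real.pi))⁻¹) + Real.log (gFun x) := by
      funext x
      rw [show Phi x = (Real.sqrt (2 * Real.pi))⁻¹ * gFun x from rfl,
        Real.log_mul hc.ne' (gFun_pos x).ne']
    rw [heq]
    exact (concaveOn_const _ convex_univ).add concave_log_gFun
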